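/- (Phase II bound) For every A : Finset E, Σ_{i ∈ Fin k} λ i · (1 − Δ_i(A)) ≤ Σ_{e ∈ E2, C̃_A(e) ≤ S(e)} (S(e) − C̃_A(e)). -/

import Mathlib

open Finset

lemma weierstrass {ι : Type*} (s : Finset ι) (f : ι → ℝ)
    (h0 : ∀ i ∈ s, 0 ≤ f i) (h1 : ∀ i ∈ s, f i ≤ 1) :
    1 - ∏ i ∈ s, f i ≤ ∑ i ∈ s, (1 - f i) := by
  classical
  induction s using Finset.induction_on with
  | empty => simp
  | insert a s hx ih =>
    rw [prod_insert hx, sum_insert hx]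
    have h0' : ∀ i ∈ s, 0 ≤ f i := fun i hi => h0 i (mem_insert_of_mem hi)
    have h1' : ∀ i ∈ s, f i ≤ 1 := fun i hi => h1 i (mem_insert_of_mem hi)
    have ha0 := h0 a (mem_insert_self a s)
    have ha1 := h1 a (mem_insert_self a s)
    have hprod0 : (0:ℝ) ≤ ∏ i ∈ s, f i := prod_nonneg h0'
    have hprod1 : ∏ i ∈ s, f i ≤ 1 := prod_le_one h0' h1'
    have := ih h0' h1'
    nlinarith

theorem phaseII_bound
    {E : Type*} [Fintype E] [DecidableEq E]
    (k : ℕ) (hk : 1 ≤ k)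
    (p : Fin k → Finset E) (hp : ∀ i, (p i).Nonempty)
    (lam : Fin k → ℝ) (hlam : ∀ i, 0 < lam i)
    (C : E → ℝ) (γ : ℝ) (hγ : 0 ≤ γ) (hγC : ∀ e, γ ≤ C e) :
    let Ct : Finset E → E → ℝ := fun A e => if e ∈ A then C e - γ else C e
    let E2 : Finset E :=
      univ.filter (fun e => 2 ≤ ({i | e ∈ p i} : Finset (Fin k)).card)
    let S : E → ℝ := fun e => ∑ j ∈ ({j | e ∈ p j} : Finset (Fin k)), lam j
    let Δ : Fin k → Finset E → ℝ := fun i A =>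
      ∏ e ∈ (p i ∩ E2).filter (fun e => Ct A e ≤ S e), Ct A e / S e
    ∀ A : Finset E,
      ∑ i : Fin k, lam i * (1 - Δ i A) ≤
        ∑ e ∈ E2.filter (fun e => Ct A e ≤ S e), (S e - Ct A e) := by
  intro Ct E2 S Δ A
  classical
  have hCt0 : ∀ e, 0 ≤ Ct A e := by
    intro e; simp only [Ct]; split
    · linarith [hγC e]
    · linarith [hγC e, hγ]
  have hSpos : ∀ e ∈ E2, 0 < S e := by
    intro e he
    simp only [E2, mem_filter, mem_univ, true_and] at he
    have hne : ({i | e ∈ p i} : Finset (Fin k)).Nonempty := card_pos.mp (by omega)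
    exact sum_pos (fun i _ => hlam i) hne
  have key : ∀ i : Fin k, 1 - Δ i A ≤
      ∑ e ∈ (p i ∩ E2).filter (fun e => Ct A e ≤ S e), (1 - Ct A e / S e) := by
    intro i
    apply weierstrass
    · intro e he
      simp only [mem_filter, mem_inter] at he
      exact div_nonneg (hCt0 e) (hSpos e he.1.2).le
    · intro e he
      simp only [mem_filter, mem_inter] at he
      exact div_le_one_of_le₀ he.2 (hSpos e he.1.2).le
  have hset : ∀ i : Fin k, (p i ∩ E2).filter (fun e => Ct A e ≤ S e)
      = (E2.filter (fun e => Ct A e ≤ S e)).filter (fun e => e ∈ p i) := by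
    intro i; ext e; simp only [mem_filter, mem_inter]; tauto
  calc ∑ i : Fin k, lam i * (1 - Δ i A)
      ≤ ∑ i : Fin k, lam i * ∑ e ∈ (p i ∩ E2).filter (fun e => Ct A e ≤ S e),
          (1 - Ct A e / S e) :=
        sum_le_sum fun i _ => mul_le_mul_of_nonneg_left (key i) (hlam i).le
    _ = ∑ i : Fin k, ∑ e ∈ E2.filter (fun e => Ct A e ≤ S e),
          (if e ∈ p i then lam i * (1 - Ct A e / S e) else 0) := by
        refine sum_congr rfl fun i _ => ?_
        rw [hset i, mul_sum, sum_filter]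
    _ = ∑ e ∈ E2.filter (fun e => Ct A e ≤ S e),
          ∑ i : Fin k, (if e ∈ p i then lam i * (1 - Ct A e / S e) else 0) :=
        sum_comm
    _ = ∑ e ∈ E2.filter (fun e => Ct A e ≤ S e), (S e - Ct A e) := by
        refine sum_congr rfl fun e he => ?_
        have hS : S e ≠ 0 := (hSpos e (mem_filter.mp he).1).ne'
        rw [← sum_filter]
        have : ∑ i ∈ univ.filter (fun i => e ∈ p i), lam i * (1 - Ct A e / S e)
            = S e * (1 - Ct A e / S e) := by
          rw [← sum_mul]
        rw [this, mul_one_sub, mul_div_cancel₀ _ hS]
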